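/- For every n ≥ 1, every element of Lie(n) is primitive: for every complete binary tree T with n leaves and every σ ∈ S_n, Δ̃(T(σ)) = 0. -/
import Mathlib


/-- The free module on words of positive integers, with coefficients in `R`.
`ℚ[S_n]` is identified with the span of the permutation words of {1,…,n}. -/
abbrev FW (R : Type) [CommRing R] := (List ℕ) →₀ R

variable {R : Type} [CommRing R]

/-- Concatenation product, extended bilinearly. -/
noncomputable def catW (x y : FW R) : FW R :=
  x.sum fun u a => y.sum fun v b => Finsupp.single (u ++ v) (a * b)

/-- The bracket [x,y] = x·y − y·x of the concatenation product. -/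
noncomputable def brakW (x y : FW R) : FW R := catW x y - catW y x

/-- (Incomplete) binary trees; `nil` is the empty tree. The complete binary tree with
`t.nodes + 1` leaves whose internal nodes form `t` is implicit in the definitions below. -/
inductive BT
  | nil : BT
  | nd : BT → BT → BT
deriving DecidableEq

/-- Number of nodes of a binary tree. -/
def BT.nodes : BT → ℕ
  | .nil => 0
  | .nd l r => l.nodes + r.nodes + 1

/-- The evaluation T(σ) of the complete binary tree `T` whose internal nodes form `t`, with
leaves labelled left to right by the word `w`: each leaf gets the one-letter word of its label
and each internal node the bracket of concatenation. -/
noncomputable def evalBT : BT → List ℕ → FW R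
  | .nil, w => Finsupp.single w 1
  | .nd l r, w => brakW (evalBT l (w.take (l.nodes + 1))) (evalBT r (w.drop (l.nodes + 1)))

/-- The standardization of a word with distinct letters: each letter is replaced by its rank. -/
def stdW (w : List ℕ) : List ℕ := w.map fun x => (w.filter (· ≤ x)).length

/-- The set of permutation words of {1, …, n}. -/
def permWords (n : ℕ) : Finset (List ℕ) := (List.range' 1 n).permutations.toFinset

/-- Convolution α⋆β of two permutation words: the sum of all permutation words γ of size
|α|+|β| with std(γ(1)⋯γ(m)) = α and std(γ(m+1)⋯γ(m+n)) = β. -/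
noncomputable def convW (u v : List ℕ) : FW R :=
  ∑ γ ∈ (permWords (u.length + v.length)).filter
      (fun γ => stdW (γ.take u.length) = u ∧ stdW (γ.drop u.length) = v),
    Finsupp.single γ 1

/-- The convolution product, extended bilinearly. -/
noncomputable def starW (x y : FW R) : FW R :=
  x.sum fun u a => y.sum fun v b => (a * b) • convW u v

/-- Whether the word `w` is an admissible labelling of (the completion of) `t`: at each internal
node, the smallest label lies in the left subtree and the largest in the right subtree. -/
def admB : BT → List ℕ → Bool
  | .nil, _ => true
  | .nd l r, w =>
    admB l (w.take (l.nodes + 1)) && admB r (w.drop (l.nodes + 1))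
      && decide ((w.take (l.nodes + 1)).minimum = w.minimum)
      && decide ((w.drop (l.nodes + 1)).maximum = w.maximum)

/-- c_t: the sum of the evaluations T(σ) over all admissible labellings σ of the complete
binary tree whose internal nodes form `t`. -/
noncomputable def cElt (t : BT) : FW R :=
  ∑ w ∈ (permWords (t.nodes + 1)).filter (fun w => admB t w = true), evalBT t w


/-- The target module for the reduced coproduct: the free module on pairs of words,
modelling ⊕_i ℚ[S_i] ⊗ ℚ[S_{n−i}]. -/
abbrev FW2 (R : Type) [CommRing R] := (List ℕ × List ℕ) →₀ R

/-- The reduced coproduct of a permutation word of {1,…,n}: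
Δ̃(w) = Σ_{i=1}^{n−1} w_{≤i} ⊗ std(w_{>i}), where w_{≤i} is the subword of letters ≤ i and
w_{>i} the subword of letters > i. -/
noncomputable def copW (w : List ℕ) : FW2 R :=
  ∑ i ∈ Finset.Ioo 0 w.length,
    Finsupp.single (w.filter (· ≤ i), stdW (w.filter (fun x => i < x))) 1

/-- The reduced coproduct, extended linearly. -/
noncomputable def coprodW (x : FW R) : FW2 R := x.sum fun w a => a • copW w


section AuxStmt8

variable {R : Type} [CommRing R]

/-- Cutting a word by a Boolean predicate on letters. -/
def phiF (p : ℕ → Bool) (u : List ℕ) : List ℕ × List ℕ :=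
  (u.filter p, u.filter fun x => !p x)

/-- The cut map, extended linearly. -/
noncomputable def phiW (p : ℕ → Bool) (x : FW R) : FW2 R :=
  Finsupp.mapDomain (phiF p) x

/-- Componentwise concatenation on pairs, extended bilinearly. -/
noncomputable def cat2 (x y : FW2 R) : FW2 R :=
  x.sum fun u a => y.sum fun v b => Finsupp.single (u.1 ++ v.1, u.2 ++ v.2) (a * b)

noncomputable def inlW (x : FW R) : FW2 R :=
  Finsupp.mapDomain (fun u => (u, ([] : List ℕ))) x

noncomputable def inrW (x : FW R) : FW2 R :=
  Finsupp.mapDomain (fun u => (([] : List ℕ), u)) x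

lemma mapDomainFW_sub (f : List ℕ → List ℕ × List ℕ) (x y : FW R) :
    Finsupp.mapDomain f (x - y) = Finsupp.mapDomain f x - Finsupp.mapDomain f y := by
  exact map_sub (Finsupp.mapDomain.addMonoidHom f) x y

lemma cat2_zero_left (y : FW2 R) : cat2 0 y = 0 := Finsupp.sum_zero_index

lemma cat2_zero_right (x : FW2 R) : cat2 x 0 = 0 := by
  simp [cat2]

lemma cat2_mapDomain (f g : List ℕ → List ℕ × List ℕ) (x y : FW R) :
    cat2 (Finsupp.mapDomain f x) (Finsupp.mapDomain g y)
      = x.sum fun u a => y.sum fun v b =>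
          Finsupp.single ((f u).1 ++ (g v).1, (f u).2 ++ (g v).2) (a * b) := by
  unfold cat2
  rw [Finsupp.sum_mapDomain_index (by intro b; simp)
    (by intro b m₁ m₂; simp [add_mul, Finsupp.single_add, Finsupp.sum_add])]
  apply Finsupp.sum_congr
  intro u _
  rw [Finsupp.sum_mapDomain_index (by intro b; simp)
    (by intro b m₁ m₂; simp [mul_add, Finsupp.single_add])]

lemma mapDomain_catW (f : List ℕ → List ℕ × List ℕ) (x y : FW R) :
    Finsupp.mapDomain f (catW x y)
      = x.sum fun u a => y.sum fun v b => Finsupp.single (f (u ++ v)) (a * b) := by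
  unfold catW
  rw [Finsupp.mapDomain_sum]
  apply Finsupp.sum_congr
  intro u _
  rw [Finsupp.mapDomain_sum]
  apply Finsupp.sum_congr
  intro v _
  rw [Finsupp.mapDomain_single]

lemma phi_cat (p : ℕ → Bool) (x y : FW R) :
    phiW p (catW x y) = cat2 (phiW p x) (phiW p y) := by
  unfold phiW
  rw [mapDomain_catW, cat2_mapDomain]
  apply Finsupp.sum_congr
  intro u _
  apply Finsupp.sum_congr
  intro v _
  simp [phiF, List.filter_append]

lemma phi_brak (p : ℕ → Bool) (x y : FW R) :
    phiW p (brakW x y) = cat2 (phiW p x) (phiW p y) - cat2 (phiW p y) (phiW p x) := by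
  unfold brakW phiW
  rw [mapDomainFW_sub]
  rw [show Finsupp.mapDomain (phiF p) (catW x y) = phiW p (catW x y) from rfl,
    show Finsupp.mapDomain (phiF p) (catW y x) = phiW p (catW y x) from rfl,
    phi_cat, phi_cat]
  rfl

lemma cat2_inl_inl (x y : FW R) : cat2 (inlW x) (inlW y) = inlW (catW x y) := by
  unfold inlW
  rw [cat2_mapDomain, mapDomain_catW]
  apply Finsupp.sum_congr
  intro u _
  apply Finsupp.sum_congr
  intro v _
  simp

lemma cat2_inr_inr (x y : FW R) : cat2 (inrW x) (inrW y) = inrW (catW x y) := by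
  unfold inrW
  rw [cat2_mapDomain, mapDomain_catW]
  apply Finsupp.sum_congr
  intro u _
  apply Finsupp.sum_congr
  intro v _
  simp

lemma cat2_inl_inr (x y : FW R) : cat2 (inlW x) (inrW y) = cat2 (inrW y) (inlW x) := by
  unfold inlW inrW
  rw [cat2_mapDomain, cat2_mapDomain, Finsupp.sum_comm]
  apply Finsupp.sum_congr
  intro v _
  apply Finsupp.sum_congr
  intro u _
  simp [mul_comm]

lemma phi_all (p : ℕ → Bool) : ∀ (t : BT) (w : List ℕ), (∀ a ∈ w, p a = true) →
    phiW p (evalBT t w : FW R) = inlW (evalBT t w)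
  | .nil, w, h => by
    unfold evalBT phiW inlW
    rw [Finsupp.mapDomain_single, Finsupp.mapDomain_single]
    have h1 : w.filter p = w := List.filter_eq_self.mpr h
    have h2 : (w.filter fun x => !p x) = [] := by
      apply List.filter_eq_nil_iff.mpr
      intro a ha
      simp [h a ha]
    simp [phiF, h1, h2]
  | .nd l r, w, h => by
    show phiW p (brakW (evalBT l (w.take (l.nodes + 1))) (evalBT r (w.drop (l.nodes + 1))))
      = inlW (brakW (evalBT l (w.take (l.nodes + 1))) (evalBT r (w.drop (l.nodes + 1))))
    rw [phi_brak,
      phi_all p l _ (fun a ha => h a (List.take_subset _ _ ha)),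
      phi_all p r _ (fun a ha => h a (List.drop_subset _ _ ha)),
      cat2_inl_inl, cat2_inl_inl]
    unfold brakW inlW
    rw [mapDomainFW_sub]

lemma phi_none (p : ℕ → Bool) : ∀ (t : BT) (w : List ℕ), (∀ a ∈ w, p a = false) →
    phiW p (evalBT t w : FW R) = inrW (evalBT t w)
  | .nil, w, h => by
    unfold evalBT phiW inrW
    rw [Finsupp.mapDomain_single, Finsupp.mapDomain_single]
    have h1 : (w.filter fun x => !p x) = w := by
      apply List.filter_eq_self.mpr
      intro a ha
      simp [h a ha]
    have h2 : w.filter p = [] := by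
      apply List.filter_eq_nil_iff.mpr
      intro a ha
      simp [h a ha]
    simp [phiF, h1, h2]
  | .nd l r, w, h => by
    show phiW p (brakW (evalBT l (w.take (l.nodes + 1))) (evalBT r (w.drop (l.nodes + 1))))
      = inrW (brakW (evalBT l (w.take (l.nodes + 1))) (evalBT r (w.drop (l.nodes + 1))))
    rw [phi_brak,
      phi_none p l _ (fun a ha => h a (List.take_subset _ _ ha)),
      phi_none p r _ (fun a ha => h a (List.drop_subset _ _ ha)),
      cat2_inr_inr, cat2_inr_inr]
    unfold brakW inrW
    rw [mapDomainFW_sub]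

lemma phi_mixed (p : ℕ → Bool) : ∀ (t : BT) (w : List ℕ), w.length = t.nodes + 1 →
    (∃ a ∈ w, p a = true) → (∃ a ∈ w, p a = false) →
    phiW p (evalBT t w : FW R) = 0
  | .nil, w, hl, hT, hF => by
    obtain ⟨c, rfl⟩ := List.length_eq_one_iff.mp hl
    obtain ⟨a, ha, hpa⟩ := hT
    obtain ⟨b, hb, hpb⟩ := hF
    simp only [List.mem_singleton] at ha hb
    subst ha; subst hb
    rw [hpa] at hpb
    cases hpb
  | .nd l r, w, hl, hT, hF => by
    have hnodes : w.length = l.nodes + r.nodes + 1 + 1 := by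
      simpa [BT.nodes] using hl
    have hl1 : (w.take (l.nodes + 1)).length = l.nodes + 1 := by
      simp [List.length_take]; omega
    have hl2 : (w.drop (l.nodes + 1)).length = r.nodes + 1 := by
      simp [List.length_drop]; omega
    have hw12 : w.take (l.nodes + 1) ++ w.drop (l.nodes + 1) = w :=
      List.take_append_drop _ _
    show phiW p (brakW (evalBT l (w.take (l.nodes + 1))) (evalBT r (w.drop (l.nodes + 1)))) = 0
    rw [phi_brak]
    rcases em (∃ a ∈ w.take (l.nodes + 1), p a = false) with h1f | h1f
    · rcases em (∃ a ∈ w.take (l.nodes + 1), p a = true) with h1t | h1t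
      · rw [phi_mixed p l _ hl1 h1t h1f, cat2_zero_left, cat2_zero_right, sub_zero]
      · have h1 : ∀ a ∈ w.take (l.nodes + 1), p a = false := by
          intro a ha
          cases hpa : p a
          · rfl
          · exact absurd ⟨a, ha, hpa⟩ h1t
        rcases em (∃ a ∈ w.drop (l.nodes + 1), p a = false) with h2f | h2f
        · rcases em (∃ a ∈ w.drop (l.nodes + 1), p a = true) with h2t | h2t
          · rw [phi_mixed p r _ hl2 h2t h2f, cat2_zero_right, cat2_zero_left, sub_zero]
          · exfalso
            obtain ⟨a, ha, hpa⟩ := hT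
            rw [← hw12] at ha
            rcases List.mem_append.mp ha with h | h
            · rw [h1 a h] at hpa; cases hpa
            · exact h2t ⟨a, h, hpa⟩
        · have h2 : ∀ a ∈ w.drop (l.nodes + 1), p a = true := by
            intro a ha
            cases hpa : p a
            · exact absurd ⟨a, ha, hpa⟩ h2f
            · rfl
          rw [phi_none p l _ h1, phi_all p r _ h2, ← cat2_inl_inr, sub_self]
    · have h1 : ∀ a ∈ w.take (l.nodes + 1), p a = true := by
        intro a ha
        cases hpa : p a
        · exact absurd ⟨a, ha, hpa⟩ h1f
        · rfl
      rcases em (∃ a ∈ w.drop (l.nodes + 1), p a = true) with h2t | h2t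
      · rcases em (∃ a ∈ w.drop (l.nodes + 1), p a = false) with h2f | h2f
        · rw [phi_mixed p r _ hl2 h2t h2f, cat2_zero_right, cat2_zero_left, sub_zero]
        · exfalso
          obtain ⟨a, ha, hpa⟩ := hF
          rw [← hw12] at ha
          rcases List.mem_append.mp ha with h | h
          · rw [h1 a h] at hpa; cases hpa
          · exact h2f ⟨a, h, hpa⟩
      · have h2 : ∀ a ∈ w.drop (l.nodes + 1), p a = false := by
          intro a ha
          cases hpa : p a
          · rfl
          · exact absurd ⟨a, ha, hpa⟩ h2t
        rw [phi_all p l _ h1, phi_none p r _ h2, cat2_inl_inr, sub_self]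

lemma supp_catW (x y : FW R) (u : List ℕ) (hu : u ∈ (catW x y).support) :
    ∃ a ∈ x.support, ∃ b ∈ y.support, u = a ++ b := by
  classical
  have h1 := Finsupp.support_sum hu
  obtain ⟨a, ha, hu1⟩ := Finset.mem_biUnion.mp h1
  have h2 := Finsupp.support_sum hu1
  obtain ⟨b, hb, hu2⟩ := Finset.mem_biUnion.mp h2
  have h3 := Finsupp.support_single_subset hu2
  exact ⟨a, ha, b, hb, Finset.mem_singleton.mp h3⟩

lemma supp_len : ∀ (t : BT) (w u : List ℕ), u ∈ (evalBT t w : FW R).support →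
    u.length = w.length
  | .nil, w, u, hu => by
    unfold evalBT at hu
    have := Finsupp.support_single_subset hu
    rw [Finset.mem_singleton.mp this]
  | .nd l r, w, u, hu => by
    classical
    have hlen : (w.take (l.nodes + 1)).length + (w.drop (l.nodes + 1)).length = w.length := by
      rw [← List.length_append, List.take_append_drop]
    unfold evalBT brakW at hu
    rcases Finset.mem_union.mp (Finsupp.support_sub hu) with h | h
    · obtain ⟨a, ha, b, hb, rfl⟩ := supp_catW _ _ _ h
      rw [List.length_append, supp_len l _ a ha, supp_len r _ b hb, hlen]
    · obtain ⟨a, ha, b, hb, rfl⟩ := supp_catW _ _ _ h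
      rw [List.length_append, supp_len r _ a ha, supp_len l _ b hb, add_comm, hlen]

lemma coprodW_eq (n : ℕ) (x : FW R) (hx : ∀ u ∈ x.support, u.length = n) :
    coprodW x = ∑ i ∈ Finset.Ioo 0 n,
      Finsupp.mapDomain (fun q : List ℕ × List ℕ => (q.1, stdW q.2))
        (phiW (fun a => decide (a ≤ i)) x) := by
  unfold coprodW phiW
  have hright : ∀ i : ℕ,
      Finsupp.mapDomain (fun q : List ℕ × List ℕ => (q.1, stdW q.2))
        (Finsupp.mapDomain (phiF (fun a => decide (a ≤ i))) x)
      = x.sum fun u a => Finsupp.single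
          (u.filter (fun z => decide (z ≤ i)), stdW (u.filter fun z => !decide (z ≤ i))) a := by
    intro i
    rw [← Finsupp.mapDomain_comp]
    rfl
  simp only [hright]
  simp only [Finsupp.sum]
  rw [Finset.sum_comm]
  apply Finset.sum_congr rfl
  intro u hu
  rw [copW]
  rw [hx u hu]
  rw [Finset.smul_sum]
  apply Finset.sum_congr rfl
  intro i _
  have hfilt : (u.filter fun z => !decide (z ≤ i)) = u.filter fun z => decide (i < z) := by
    apply List.filter_congr
    intro z _
    rw [← decide_not, decide_eq_decide]
    exact Nat.not_le
  rw [hfilt, Finsupp.smul_single, smul_eq_mul, mul_one]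

end AuxStmt8

theorem stmt8 : ∀ n : ℕ, 1 ≤ n → ∀ t : BT, t.nodes + 1 = n → ∀ w ∈ permWords n,
    coprodW (evalBT t w : FW ℚ) = 0 := by
  intro n hn t ht w hw
  have hperm : w.Perm (List.range' 1 n) :=
    List.mem_permutations.mp (List.mem_toFinset.mp hw)
  have hlen : w.length = n := by simpa using hperm.length_eq
  rw [coprodW_eq n _ (fun u hu => by rw [supp_len t w u hu, hlen])]
  apply Finset.sum_eq_zero
  intro i hi
  obtain ⟨hi0, hin⟩ := Finset.mem_Ioo.mp hi
  have h1 : (1 : ℕ) ∈ w := hperm.mem_iff.mpr (List.mem_range'_1.mpr ⟨le_refl 1, by omega⟩)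
  have hnn : n ∈ w := hperm.mem_iff.mpr (List.mem_range'_1.mpr ⟨hn, by omega⟩)
  rw [phi_mixed _ t w (hlen.trans ht.symm)
    ⟨1, h1, by simp; omega⟩ ⟨n, hnn, by simp; omega⟩]
  exact Finsupp.mapDomain_zero
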